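/- The image f(ℂ) of the map f : ℂ → ℂˣ × ℂˣ, f(t) = (exp(t), exp(i·t)), is a closed subset of ℂˣ × ℂˣ (with the topology induced from ℂ × ℂ). -/

import Mathlib

open Complex Filter Topology

/-- The map `f : ℂ → ℂˣ × ℂˣ` given by `f t = (exp t, exp (I * t))`. -/
noncomputable def f (t : ℂ) : ℂˣ × ℂˣ :=
  (Units.mk0 (Complex.exp t) (Complex.exp_ne_zero t),
   Units.mk0 (Complex.exp (Complex.I * t)) (Complex.exp_ne_zero (Complex.I * t)))

instance : TopologicalSpace.MetrizableSpace ℂˣ := Units.isEmbedding_val₀.metrizableSpace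

/-- The image `f(ℂ)` is a closed subset of `ℂˣ × ℂˣ`
(whose topology is the one induced from `ℂ × ℂ`). -/
theorem stmt1 : IsClosed (Set.range f) := by
  apply IsSeqClosed.isClosed
  intro x p hx hp
  choose t ht using hx
  -- convergence of the values
  have h1 : Tendsto (fun n => Complex.exp (t n)) atTop (𝓝 (p.1 : ℂ)) := by
    have : Tendsto (fun n => ((x n).1 : ℂ)) atTop (𝓝 (p.1 : ℂ)) :=
      (Units.continuous_val.comp continuous_fst).continuousAt.tendsto.comp hp
    refine this.congr fun n => ?_
    rw [← ht n]; rfl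
  have h2 : Tendsto (fun n => Complex.exp (Complex.I * t n)) atTop (𝓝 (p.2 : ℂ)) := by
    have : Tendsto (fun n => ((x n).2 : ℂ)) atTop (𝓝 (p.2 : ℂ)) :=
      (Units.continuous_val.comp continuous_snd).continuousAt.tendsto.comp hp
    refine this.congr fun n => ?_
    rw [← ht n]; rfl
  have hp1 : ‖(p.1 : ℂ)‖ ≠ 0 := norm_ne_zero_iff.mpr p.1.ne_zero
  have hp2 : ‖(p.2 : ℂ)‖ ≠ 0 := norm_ne_zero_iff.mpr p.2.ne_zero
  have hre : Tendsto (fun n => (t n).re) atTop (𝓝 (Real.log (‖(p.1 : ℂ)‖))) := by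
    have := ((Real.continuousAt_log hp1).tendsto.comp
      ((continuous_norm.continuousAt).tendsto.comp h1))
    refine this.congr fun n => ?_
    simp [Function.comp, Complex.norm_exp, Real.log_exp]
  have him : Tendsto (fun n => (t n).im) atTop (𝓝 (-Real.log (‖(p.2 : ℂ)‖))) := by
    have := ((Real.continuousAt_log hp2).tendsto.comp
      ((continuous_norm.continuousAt).tendsto.comp h2)).neg
    refine this.congr fun n => ?_
    have : (Complex.I * t n).re = -(t n).im := by simp
    simp [Function.comp, Complex.norm_exp, this, Real.log_exp]
  set T : ℂ := (Real.log (‖(p.1 : ℂ)‖) : ℂ) +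
      (-Real.log (‖(p.2 : ℂ)‖) : ℝ) * Complex.I with hT
  have hTt : Tendsto t atTop (𝓝 T) := by
    have : Tendsto (fun n => ((t n).re : ℂ) + ((t n).im : ℂ) * Complex.I) atTop (𝓝 T) := by
      exact ((Complex.continuous_ofReal.continuousAt.tendsto.comp hre).add
        ((Complex.continuous_ofReal.continuousAt.tendsto.comp him).mul tendsto_const_nhds))
    refine this.congr fun n => ?_
    simp [Complex.re_add_im]
  have e1 : Complex.exp T = (p.1 : ℂ) :=
    tendsto_nhds_unique ((Complex.continuous_exp.continuousAt.tendsto).comp hTt) h1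
  have e2 : Complex.exp (Complex.I * T) = (p.2 : ℂ) :=
    tendsto_nhds_unique ((Complex.continuous_exp.continuousAt.tendsto).comp
      (hTt.const_mul Complex.I)) h2
  refine ⟨T, ?_⟩
  ext <;> simp [f, e1, e2]
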